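/- The map t ↦ ‖y − X_t β̃_t‖₂ extends continuously to the closed cube: for every sequence t^(ℓ) ∈ (0,1)^J converging to t ∈ [0,1]^J, the limit lim_{ℓ→∞} ‖y − X_{t^(ℓ)} β̃_{t^(ℓ)}‖₂ exists and equals ‖y − X_t β̃_t‖₂, where β̃_t denotes a solution of L_t u = (1/n) X_t^T y. -/

import Mathlib

open Matrix

/-- The group-structured diagonal matrix `T_t` repeating each `t j` over group `j`. -/
noncomputable def Tmat {p J : ℕ} (g : Fin p → Fin J) (t : Fin J → ℝ) :
    Matrix (Fin p) (Fin p) ℝ :=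
  Matrix.diagonal fun i => t (g i)

/-- `L_t = (1/n) X_tᵀ X_t + (I − T_t²)` with `X_t = X T_t`. -/
noncomputable def Lmat {n p J : ℕ} (X : Matrix (Fin n) (Fin p) ℝ)
    (g : Fin p → Fin J) (t : Fin J → ℝ) : Matrix (Fin p) (Fin p) ℝ :=
  ((1 : ℝ) / n) • ((X * Tmat g t)ᵀ * (X * Tmat g t)) +
    ((1 : Matrix (Fin p) (Fin p) ℝ) - Tmat g t * Tmat g t)

/-- The map `t ↦ ‖y − X_t β̃_t‖₂` extends continuously to the closed cube: for every
sequence `t⁽ℓ⁾ ∈ (0,1)^J` converging to `t ∈ [0,1]^J`, the limit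
`lim_ℓ ‖y − X_{t⁽ℓ⁾} β̃_{t⁽ℓ⁾}‖₂` exists and equals `‖y − X_t β̃_t‖₂`, where `β̃_t`
denotes a solution of `L_t u = (1/n) X_tᵀ y`. -/
lemma mulVec_Tmat {n p J : ℕ} (X : Matrix (Fin n) (Fin p) ℝ) (g : Fin p → Fin J)
    (t : Fin J → ℝ) (u : Fin p → ℝ) :
    (X * Tmat g t).mulVec u = X.mulVec (fun i => t (g i) * u i) := by
  funext i
  rw [← Matrix.mulVec_mulVec]
  congr 1
  funext k
  rw [Tmat, Matrix.mulVec_diagonal]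

lemma transpose_mulVec_Tmat {n p J : ℕ} (X : Matrix (Fin n) (Fin p) ℝ) (g : Fin p → Fin J)
    (t : Fin J → ℝ) (z : Fin n → ℝ) (i : Fin p) :
    ((X * Tmat g t)ᵀ.mulVec z) i = t (g i) * ∑ a, X a i * z a := by
  simp only [Matrix.mulVec, dotProduct, Matrix.transpose_apply, Tmat,
    Matrix.mul_diagonal, Finset.mul_sum]
  exact Finset.sum_congr rfl (fun a _ => by ring)

lemma normal_comp {n p J : ℕ} (hn : (0:ℝ) < n) (X : Matrix (Fin n) (Fin p) ℝ)
    (g : Fin p → Fin J) (t : Fin J → ℝ) (y : Fin n → ℝ) (β : Fin p → ℝ)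
    (hβ : (Lmat X g t).mulVec β = ((1:ℝ)/n) • ((X * Tmat g t)ᵀ.mulVec y)) (i : Fin p) :
    t (g i) * (∑ a, X a i * (y a - X.mulVec (fun k => t (g k) * β k) a))
      = (n:ℝ) * ((1 - t (g i)^2) * β i) := by
  have h := congrFun hβ i
  set w : Fin n → ℝ := X.mulVec (fun k => t (g k) * β k) with hw
  have hL : (Lmat X g t).mulVec β i
      = (1/(n:ℝ)) * (t (g i) * ∑ a, X a i * w a) + (β i - t (g i) * t (g i) * β i) := by
    rw [Lmat, Matrix.add_mulVec, Matrix.smul_mulVec, ← Matrix.mulVec_mulVec,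
      mulVec_Tmat, Matrix.sub_mulVec, Matrix.one_mulVec]
    have hTT : (Tmat g t * Tmat g t).mulVec β i = t (g i) * t (g i) * β i := by
      rw [Tmat, Matrix.diagonal_mul_diagonal, Matrix.mulVec_diagonal]
    simp only [Pi.add_apply, Pi.smul_apply, Pi.sub_apply, smul_eq_mul, hTT,
      transpose_mulVec_Tmat, ← hw]
  rw [hL] at h
  simp only [Pi.smul_apply, smul_eq_mul, transpose_mulVec_Tmat] at h
  have hsum : ∑ a, X a i * (y a - w a) = (∑ a, X a i * y a) - ∑ a, X a i * w a := by
    rw [← Finset.sum_sub_distrib]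
    exact Finset.sum_congr rfl (fun a _ => by ring)
  rw [hsum]
  have hn' : (n:ℝ) ≠ 0 := ne_of_gt hn
  field_simp at h
  nlinarith [h]

lemma key_identity {n p : ℕ} (hn : (0:ℝ) < n) (X : Matrix (Fin n) (Fin p) ℝ)
    (y : Fin n → ℝ) (s β : Fin p → ℝ)
    (hne : ∀ i, s i * (∑ a, X a i * (y a - X.mulVec (fun k => s k * β k) a))
      = (n:ℝ) * ((1 - s i^2) * β i))
    (u : Fin p → ℝ) :
    (1/(n:ℝ)) * ∑ a, (y a - X.mulVec (fun k => s k * u k) a)^2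
      + ∑ i, (1 - s i^2) * u i^2
    = ((1/(n:ℝ)) * ∑ a, (y a - X.mulVec (fun k => s k * β k) a)^2
        + ∑ i, (1 - s i^2) * β i^2)
      + ((1/(n:ℝ)) * ∑ a, (X.mulVec (fun k => s k * (u k - β k)) a)^2
        + ∑ i, (1 - s i^2) * (u i - β i)^2) := by
  have hn' : (n:ℝ) ≠ 0 := ne_of_gt hn
  have hlin : ∀ a, X.mulVec (fun k => s k * u k) a
      = X.mulVec (fun k => s k * β k) a + X.mulVec (fun k => s k * (u k - β k)) a := by
    intro a
    simp only [Matrix.mulVec, dotProduct, ← Finset.sum_add_distrib]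
    exact Finset.sum_congr rfl fun k _ => by ring
  have hsq : ∑ a, (y a - X.mulVec (fun k => s k * u k) a)^2
      = ∑ a, (y a - X.mulVec (fun k => s k * β k) a)^2
        - 2 * ∑ a, (y a - X.mulVec (fun k => s k * β k) a)
            * X.mulVec (fun k => s k * (u k - β k)) a
        + ∑ a, (X.mulVec (fun k => s k * (u k - β k)) a)^2 := by
    rw [Finset.mul_sum, ← Finset.sum_sub_distrib, ← Finset.sum_add_distrib]
    exact Finset.sum_congr rfl fun a _ => by rw [hlin a]; ring
  have hcross : ∑ a, (y a - X.mulVec (fun k => s k * β k) a)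
        * X.mulVec (fun k => s k * (u k - β k)) a
      = (n:ℝ) * ∑ i, (1 - s i^2) * β i * (u i - β i) := by
    calc ∑ a, (y a - X.mulVec (fun k => s k * β k) a)
            * X.mulVec (fun k => s k * (u k - β k)) a
        = ∑ a, ∑ i, (X a i * (y a - X.mulVec (fun k => s k * β k) a)) * (s i * (u i - β i)) := by
          refine Finset.sum_congr rfl fun a _ => ?_
          simp only [Matrix.mulVec, dotProduct, Finset.mul_sum]
          exact Finset.sum_congr rfl fun i _ => by ring
      _ = ∑ i, ∑ a, (X a i * (y a - X.mulVec (fun k => s k * β k) a)) * (s i * (u i - β i)) :=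
          Finset.sum_comm
      _ = ∑ i, (s i * ∑ a, X a i * (y a - X.mulVec (fun k => s k * β k) a)) * (u i - β i) := by
          refine Finset.sum_congr rfl fun i _ => ?_
          rw [Finset.mul_sum, Finset.sum_mul]
          exact Finset.sum_congr rfl fun a _ => by ring
      _ = ∑ i, ((n:ℝ) * ((1 - s i^2) * β i)) * (u i - β i) := by
          exact Finset.sum_congr rfl fun i _ => by rw [hne i]
      _ = (n:ℝ) * ∑ i, (1 - s i^2) * β i * (u i - β i) := by
          rw [Finset.mul_sum]
          exact Finset.sum_congr rfl fun i _ => by ring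
  have hpen : ∑ i, (1 - s i^2) * u i^2
      = ∑ i, (1 - s i^2) * β i^2 + ∑ i, (1 - s i^2)*(u i - β i)^2
        + 2 * ∑ i, (1 - s i^2) * β i * (u i - β i) := by
    rw [Finset.mul_sum, ← Finset.sum_add_distrib, ← Finset.sum_add_distrib]
    exact Finset.sum_congr rfl fun i _ => by ring
  rw [hsq, hcross, hpen]
  field_simp
  ring

lemma tendsto_of_sq_le {f g : ℕ → ℝ} (h : ∀ ℓ, (f ℓ)^2 ≤ g ℓ)
    (hg : Filter.Tendsto g Filter.atTop (nhds 0)) :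
    Filter.Tendsto f Filter.atTop (nhds 0) := by
  have h2 : Filter.Tendsto (fun ℓ => Real.sqrt (g ℓ)) Filter.atTop (nhds 0) := by
    have := (Real.continuous_sqrt.tendsto 0).comp hg
    simpa [Function.comp_def] using this
  refine squeeze_zero_norm (fun ℓ => ?_) h2
  rw [Real.norm_eq_abs, ← Real.sqrt_sq_eq_abs]
  exact Real.sqrt_le_sqrt (h ℓ)

set_option maxHeartbeats 2000000 in
open Filter in
lemma main_flat {n p : ℕ} (hn : (0:ℝ) < n) (X : Matrix (Fin n) (Fin p) ℝ) (y : Fin n → ℝ)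
    (sseq : ℕ → Fin p → ℝ) (hsseq : ∀ ℓ i, sseq ℓ i ∈ Set.Ioo (0:ℝ) 1)
    (s : Fin p → ℝ) (hs : ∀ i, s i ∈ Set.Icc (0:ℝ) 1)
    (hconv : ∀ i, Tendsto (fun ℓ => sseq ℓ i) atTop (nhds (s i)))
    (βseq : ℕ → Fin p → ℝ)
    (hne : ∀ ℓ i, sseq ℓ i * (∑ a, X a i * (y a - X.mulVec (fun k => sseq ℓ k * βseq ℓ k) a))
      = (n:ℝ) * ((1 - sseq ℓ i^2) * βseq ℓ i))
    (βt : Fin p → ℝ)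
    (hne0 : ∀ i, s i * (∑ a, X a i * (y a - X.mulVec (fun k => s k * βt k) a))
      = (n:ℝ) * ((1 - s i^2) * βt i))
    (b0 : Fin n) :
    Tendsto (fun ℓ => X.mulVec (fun k => sseq ℓ k * βseq ℓ k) b0) atTop
      (nhds (X.mulVec (fun k => s k * βt k) b0)) := by
  have hn' : (n:ℝ) ≠ 0 := ne_of_gt hn
  have hpenl : ∀ ℓ i, 0 < 1 - sseq ℓ i^2 := by
    intro ℓ i
    have h1 := (hsseq ℓ i).1
    have h2 := (hsseq ℓ i).2
    nlinarith
  have hpen0 : ∀ i, 0 ≤ 1 - s i^2 := by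
    intro i
    have h1 := (hs i).1
    have h2 := (hs i).2
    nlinarith
  have hP : ∀ ℓ i, 0 ≤ (1 - sseq ℓ i^2) * βseq ℓ i^2 :=
    fun ℓ i => mul_nonneg (le_of_lt (hpenl ℓ i)) (sq_nonneg _)
  have hC0 : (0:ℝ) ≤ (1/(n:ℝ)) * ∑ b, y b^2 := by positivity
  set z : Fin p → ℝ := fun _ => (0:ℝ) with hz_def
  set d : ℕ → Fin p → ℝ := fun ℓ i => if s i = 0 then sseq ℓ i * βseq ℓ i else 0 with hd_def
  set v : ℕ → Fin p → ℝ := fun ℓ i => if s i = 0 then 0 else (sseq ℓ i / s i) * βseq ℓ i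
    with hv_def
  set ε : ℕ → Fin p → ℝ := fun ℓ i => if s i = 0 then 0 else
    max (((1 - s i^2) * sseq ℓ i^2) / (s i^2 * (1 - sseq ℓ i^2)) - 1) 0
      * ((1/(n:ℝ)) * ∑ b, y b^2) with hε_def
  -- minimality at level ℓ versus 0 : value bound
  have hQC : ∀ ℓ : ℕ,
      (1/(n:ℝ)) * ∑ b, (y b - X.mulVec (fun k => sseq ℓ k * βseq ℓ k) b)^2
        + ∑ i, (1 - sseq ℓ i^2) * βseq ℓ i^2 ≤ (1/(n:ℝ)) * ∑ b, y b^2 := by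
    intro ℓ
    have h := key_identity hn X y (sseq ℓ) (βseq ℓ) (hne ℓ) z
    have h0 : (1/(n:ℝ)) * ∑ b, (y b - X.mulVec (fun k => sseq ℓ k * z k) b)^2
        + ∑ i, (1 - sseq ℓ i^2) * z i^2 = (1/(n:ℝ)) * ∑ b, y b^2 := by
      simp [hz_def, Matrix.mulVec, dotProduct]
    have h1 : 0 ≤ (1/(n:ℝ)) * ∑ b, (X.mulVec (fun k => sseq ℓ k * (z k - βseq ℓ k)) b)^2 := by
      positivity
    have h2 : 0 ≤ ∑ i, (1 - sseq ℓ i^2) * (z i - βseq ℓ i)^2 :=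
      Finset.sum_nonneg fun i _ => mul_nonneg (le_of_lt (hpenl ℓ i)) (sq_nonneg _)
    linarith [h, h0, h1, h2]
  -- individual penalty bounds
  have hPC : ∀ ℓ i, (1 - sseq ℓ i^2) * βseq ℓ i^2 ≤ (1/(n:ℝ)) * ∑ b, y b^2 := by
    intro ℓ i
    have h1 : (1 - sseq ℓ i^2) * βseq ℓ i^2 ≤ ∑ i', (1 - sseq ℓ i'^2) * βseq ℓ i'^2 :=
      Finset.single_le_sum (fun i' _ => hP ℓ i') (Finset.mem_univ i)
    have h2 : (0:ℝ) ≤ (1/(n:ℝ)) * ∑ b, (y b - X.mulVec (fun k => sseq ℓ k * βseq ℓ k) b)^2 := by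
      positivity
    linarith [hQC ℓ]
  -- residual sum bound
  have hRY : ∀ ℓ, ∑ b, (y b - X.mulVec (fun k => sseq ℓ k * βseq ℓ k) b)^2 ≤ ∑ b, y b^2 := by
    intro ℓ
    have h2 : 0 ≤ ∑ i, (1 - sseq ℓ i^2) * βseq ℓ i^2 := Finset.sum_nonneg fun i _ => hP ℓ i
    have h3 := hQC ℓ
    have h1n : (0:ℝ) < 1/(n:ℝ) := by positivity
    nlinarith
  -- pointwise residual bound
  have habs : ∀ ℓ b, |y b - X.mulVec (fun k => sseq ℓ k * βseq ℓ k) b| ≤ Real.sqrt (∑ b, y b^2) := by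
    intro ℓ b
    have h1 : (y b - X.mulVec (fun k => sseq ℓ k * βseq ℓ k) b)^2
        ≤ ∑ b', (y b' - X.mulVec (fun k => sseq ℓ k * βseq ℓ k) b')^2 :=
      Finset.single_le_sum
        (f := fun b' => (y b' - X.mulVec (fun k => sseq ℓ k * βseq ℓ k) b')^2)
        (fun b' _ => sq_nonneg _) (Finset.mem_univ b)
    rw [← Real.sqrt_sq_eq_abs]
    exact Real.sqrt_le_sqrt (by linarith [hRY ℓ])
  -- d tends to zero
  have hd0 : ∀ i, Tendsto (fun ℓ => d ℓ i) atTop (nhds 0) := by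
    intro i
    rcases eq_or_ne (s i) 0 with h0 | h0
    · apply tendsto_of_sq_le
        (g := fun ℓ => sseq ℓ i^2 / (1 - sseq ℓ i^2) * ((1/(n:ℝ)) * ∑ b, y b^2))
      · intro ℓ
        have hb := hPC ℓ i
        have hp := hpenl ℓ i
        simp only [hd_def, if_pos h0]
        rw [div_mul_eq_mul_div, le_div_iff₀ hp, mul_pow]
        nlinarith [sq_nonneg (sseq ℓ i), sq_nonneg (βseq ℓ i)]
      · have hnum : Tendsto (fun ℓ => sseq ℓ i^2) atTop (nhds (s i^2)) := (hconv i).pow 2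
        have hden : Tendsto (fun ℓ => 1 - sseq ℓ i^2) atTop (nhds (1 - s i^2)) :=
          tendsto_const_nhds.sub hnum
        have hd1 : (1:ℝ) - s i^2 ≠ 0 := by rw [h0]; norm_num
        have := (hnum.div hden hd1).mul_const ((1/(n:ℝ)) * ∑ b, y b^2)
        rw [h0] at this
        simpa using this
    · simp only [hd_def, if_neg h0]
      exact tendsto_const_nhds
  -- delta tends to zero
  have hδ0 : ∀ b, Tendsto (fun ℓ => X.mulVec (d ℓ) b) atTop (nhds 0) := by
    intro b
    have heq : (fun ℓ => X.mulVec (d ℓ) b) = fun ℓ => ∑ i, X b i * d ℓ i := by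
      funext ℓ; simp [Matrix.mulVec, dotProduct]
    rw [heq]
    have := tendsto_finset_sum (Finset.univ : Finset (Fin p))
      (fun i _ => (hd0 i).const_mul (X b i))
    simpa using this
  -- the competitor's fitted values
  have hvs : ∀ ℓ b, X.mulVec (fun k => s k * v ℓ k) b
      = X.mulVec (fun k => sseq ℓ k * βseq ℓ k) b - X.mulVec (d ℓ) b := by
    intro ℓ b
    simp only [Matrix.mulVec, dotProduct, ← Finset.sum_sub_distrib]
    refine Finset.sum_congr rfl fun k _ => ?_
    simp only [hv_def, hd_def]
    rcases eq_or_ne (s k) 0 with h0 | h0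
    · simp [h0]
    · rw [if_neg h0, if_neg h0]
      field_simp
      ring
  -- penalty comparison for the competitor
  have hpenv : ∀ ℓ i, (1 - s i^2) * (v ℓ i)^2
      ≤ (1 - sseq ℓ i^2) * βseq ℓ i^2 + ε ℓ i := by
    intro ℓ i
    rcases eq_or_ne (s i) 0 with h0 | h0
    · simp only [hv_def, hε_def, if_pos h0]
      simpa using hP ℓ i
    · have hsp : 0 < s i := lt_of_le_of_ne (hs i).1 (Ne.symm h0)
      have hsp2 : 0 < s i^2 := by positivity
      have hq : (1 - s i^2) * (v ℓ i)^2
          = (((1 - s i^2) * sseq ℓ i^2) / (s i^2 * (1 - sseq ℓ i^2)))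
            * ((1 - sseq ℓ i^2) * βseq ℓ i^2) := by
        simp only [hv_def, if_neg h0]
        have hp := hpenl ℓ i
        field_simp
      rw [hq]
      simp only [hε_def, if_neg h0]
      set κ := ((1 - s i^2) * sseq ℓ i^2) / (s i^2 * (1 - sseq ℓ i^2)) with hκ_def
      have hPb := hPC ℓ i
      have hPnn := hP ℓ i
      rcases le_or_gt κ 1 with hk | hk
      · have : κ * ((1 - sseq ℓ i^2) * βseq ℓ i^2) ≤ (1 - sseq ℓ i^2) * βseq ℓ i^2 := by
          nlinarith
        have hmx : 0 ≤ max (κ - 1) 0 * ((1/(n:ℝ)) * ∑ b, y b^2) :=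
          mul_nonneg (le_max_right _ _) hC0
        linarith
      · have hmx : max (κ - 1) 0 = κ - 1 := max_eq_left (by linarith)
        rw [hmx]
        nlinarith
  -- epsilon tends to zero
  have hε0 : ∀ i, Tendsto (fun ℓ => ε ℓ i) atTop (nhds 0) := by
    intro i
    rcases eq_or_ne (s i) 0 with h0 | h0
    · simp only [hε_def, if_pos h0]
      exact tendsto_const_nhds
    · rcases eq_or_ne (s i) 1 with h1 | h1
      · have : ∀ ℓ, ε ℓ i = 0 := by
          intro ℓ
          simp [hε_def, if_neg h0, h1]
        simp only [this]
        exact tendsto_const_nhds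
      · have hsp : 0 < s i := lt_of_le_of_ne (hs i).1 (Ne.symm h0)
        have hs1 : s i < 1 := lt_of_le_of_ne (hs i).2 h1
        have hnum : Tendsto (fun ℓ => (1 - s i^2) * sseq ℓ i^2) atTop
            (nhds ((1 - s i^2) * s i^2)) := tendsto_const_nhds.mul ((hconv i).pow 2)
        have hden : Tendsto (fun ℓ => s i^2 * (1 - sseq ℓ i^2)) atTop
            (nhds (s i^2 * (1 - s i^2))) :=
          tendsto_const_nhds.mul (tendsto_const_nhds.sub ((hconv i).pow 2))
        have hdne : s i^2 * (1 - s i^2) ≠ 0 := by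
          have : 0 < 1 - s i^2 := by nlinarith
          positivity
        have hκ : Tendsto (fun ℓ => ((1 - s i^2) * sseq ℓ i^2) / (s i^2 * (1 - sseq ℓ i^2)))
            atTop (nhds (((1 - s i^2) * s i^2) / (s i^2 * (1 - s i^2)))) :=
          hnum.div hden hdne
        have hL : ((1 - s i^2) * s i^2) / (s i^2 * (1 - s i^2)) = 1 := by
          rw [div_eq_one_iff_eq hdne]; ring
        rw [hL] at hκ
        have hmax : Tendsto
            (fun ℓ => max (((1 - s i^2) * sseq ℓ i^2) / (s i^2 * (1 - sseq ℓ i^2)) - 1) 0)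
            atTop (nhds (max ((1:ℝ) - 1) 0)) :=
          (hκ.sub_const 1).max tendsto_const_nhds
        have hfin := hmax.mul_const ((1/(n:ℝ)) * ∑ b, y b^2)
        simp only [hε_def, if_neg h0]
        simpa using hfin
  -- φ tends to 0
  have hφ0 : Tendsto (fun ℓ => ∑ b, (2 * Real.sqrt (∑ b', y b'^2) * |X.mulVec (d ℓ) b|
      + (X.mulVec (d ℓ) b)^2)) atTop (nhds 0) := by
    have hper : ∀ b : Fin n, Tendsto (fun ℓ => 2 * Real.sqrt (∑ b', y b'^2) * |X.mulVec (d ℓ) b|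
        + (X.mulVec (d ℓ) b)^2) atTop (nhds 0) := by
      intro b
      have h1 := ((hδ0 b).abs.const_mul (2 * Real.sqrt (∑ b', y b'^2))).add ((hδ0 b).pow 2)
      simpa using h1
    have := tendsto_finset_sum (Finset.univ : Finset (Fin n)) (fun b _ => hper b)
    simpa using this
  -- fit comparison for the competitor
  have hfitv : ∀ ℓ, ∑ b, (y b - X.mulVec (fun k => s k * v ℓ k) b)^2
      ≤ ∑ b, ((y b - X.mulVec (fun k => sseq ℓ k * βseq ℓ k) b)^2
        + (2 * Real.sqrt (∑ b', y b'^2) * |X.mulVec (d ℓ) b| + (X.mulVec (d ℓ) b)^2)) := by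
    intro ℓ
    refine Finset.sum_le_sum fun b _ => ?_
    rw [hvs ℓ b]
    have h1 := habs ℓ b
    have h3 : (y b - X.mulVec (fun k => sseq ℓ k * βseq ℓ k) b) * (X.mulVec (d ℓ) b)
        ≤ Real.sqrt (∑ b', y b'^2) * |X.mulVec (d ℓ) b| := by
      calc (y b - X.mulVec (fun k => sseq ℓ k * βseq ℓ k) b) * (X.mulVec (d ℓ) b)
          ≤ |(y b - X.mulVec (fun k => sseq ℓ k * βseq ℓ k) b) * (X.mulVec (d ℓ) b)| :=
            le_abs_self _
        _ = |y b - X.mulVec (fun k => sseq ℓ k * βseq ℓ k) b| * |X.mulVec (d ℓ) b| :=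
            abs_mul _ _
        _ ≤ Real.sqrt (∑ b', y b'^2) * |X.mulVec (d ℓ) b| :=
            mul_le_mul_of_nonneg_right h1 (abs_nonneg _)
    nlinarith [h3]
  -- continuity of Q at fixed βt
  have hcont : Tendsto (fun ℓ => (1/(n:ℝ)) * ∑ b, (y b - X.mulVec (fun k => sseq ℓ k * βt k) b)^2
      + ∑ i, (1 - sseq ℓ i^2) * βt i^2) atTop
      (nhds ((1/(n:ℝ)) * ∑ b, (y b - X.mulVec (fun k => s k * βt k) b)^2
        + ∑ i, (1 - s i^2) * βt i^2)) := by
    refine Tendsto.add (Tendsto.const_mul _ ?_) ?_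
    · refine tendsto_finset_sum _ fun b _ => ?_
      have hmv : Tendsto (fun ℓ => X.mulVec (fun k => sseq ℓ k * βt k) b) atTop
          (nhds (X.mulVec (fun k => s k * βt k) b)) := by
        simp only [Matrix.mulVec, dotProduct]
        exact tendsto_finset_sum _ fun k _ => (((hconv k).mul_const (βt k)).const_mul (X b k))
      exact (tendsto_const_nhds.sub hmv).pow 2
    · refine tendsto_finset_sum _ fun i _ => ?_
      exact (tendsto_const_nhds.sub ((hconv i).pow 2)).mul_const (βt i^2)
  -- minimality at level ℓ against βt
  have hmin : ∀ ℓ, (1/(n:ℝ)) * ∑ b, (y b - X.mulVec (fun k => sseq ℓ k * βseq ℓ k) b)^2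
      + ∑ i, (1 - sseq ℓ i^2) * βseq ℓ i^2
      ≤ (1/(n:ℝ)) * ∑ b, (y b - X.mulVec (fun k => sseq ℓ k * βt k) b)^2
        + ∑ i, (1 - sseq ℓ i^2) * βt i^2 := by
    intro ℓ
    have h := key_identity hn X y (sseq ℓ) (βseq ℓ) (hne ℓ) βt
    have h1 : 0 ≤ (1/(n:ℝ)) * ∑ b, (X.mulVec (fun k => sseq ℓ k * (βt k - βseq ℓ k)) b)^2 := by
      positivity
    have h2 : 0 ≤ ∑ i, (1 - sseq ℓ i^2) * (βt i - βseq ℓ i)^2 :=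
      Finset.sum_nonneg fun i _ => mul_nonneg (le_of_lt (hpenl ℓ i)) (sq_nonneg _)
    linarith
  -- key identity at limit with competitor
  have hkey0 := fun ℓ => key_identity hn X y s βt hne0 (v ℓ)
  -- the gap bound
  have hGb : ∀ ℓ, (1/(n:ℝ)) * ∑ b, (X.mulVec (fun k => s k * (v ℓ k - βt k)) b)^2
      ≤ (((1/(n:ℝ)) * ∑ b, (y b - X.mulVec (fun k => sseq ℓ k * βt k) b)^2
          + ∑ i, (1 - sseq ℓ i^2) * βt i^2)
        - ((1/(n:ℝ)) * ∑ b, (y b - X.mulVec (fun k => s k * βt k) b)^2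
          + ∑ i, (1 - s i^2) * βt i^2))
        + ((1/(n:ℝ)) * ∑ b, (2 * Real.sqrt (∑ b', y b'^2) * |X.mulVec (d ℓ) b|
            + (X.mulVec (d ℓ) b)^2) + ∑ i, ε ℓ i) := by
    intro ℓ
    have h0 := hkey0 ℓ
    have hpen2 : 0 ≤ ∑ i, (1 - s i^2) * (v ℓ i - βt i)^2 :=
      Finset.sum_nonneg fun i _ => mul_nonneg (hpen0 i) (sq_nonneg _)
    have hfit := hfitv ℓ
    have hpen3 : ∑ i, (1 - s i^2) * (v ℓ i)^2
        ≤ ∑ i, ((1 - sseq ℓ i^2) * βseq ℓ i^2 + ε ℓ i) :=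
      Finset.sum_le_sum fun i _ => hpenv ℓ i
    have hminl := hmin ℓ
    have h1n : (0:ℝ) ≤ 1/(n:ℝ) := by positivity
    have hfit' := mul_le_mul_of_nonneg_left hfit h1n
    have hd1 : (1/(n:ℝ)) * ∑ b, ((y b - X.mulVec (fun k => sseq ℓ k * βseq ℓ k) b)^2
        + (2 * Real.sqrt (∑ b', y b'^2) * |X.mulVec (d ℓ) b| + (X.mulVec (d ℓ) b)^2))
        = (1/(n:ℝ)) * ∑ b, (y b - X.mulVec (fun k => sseq ℓ k * βseq ℓ k) b)^2
          + (1/(n:ℝ)) * ∑ b, (2 * Real.sqrt (∑ b', y b'^2) * |X.mulVec (d ℓ) b|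
            + (X.mulVec (d ℓ) b)^2) := by
      rw [Finset.sum_add_distrib]; ring
    have hd2 : ∑ i, ((1 - sseq ℓ i^2) * βseq ℓ i^2 + ε ℓ i)
        = ∑ i, (1 - sseq ℓ i^2) * βseq ℓ i^2 + ∑ i, ε ℓ i := Finset.sum_add_distrib
    rw [hd1] at hfit'
    rw [hd2] at hpen3
    linarith
  -- the upper bound tends to zero
  have hU : Tendsto (fun ℓ =>
      (((1/(n:ℝ)) * ∑ b, (y b - X.mulVec (fun k => sseq ℓ k * βt k) b)^2
          + ∑ i, (1 - sseq ℓ i^2) * βt i^2)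
        - ((1/(n:ℝ)) * ∑ b, (y b - X.mulVec (fun k => s k * βt k) b)^2
          + ∑ i, (1 - s i^2) * βt i^2))
        + ((1/(n:ℝ)) * ∑ b, (2 * Real.sqrt (∑ b', y b'^2) * |X.mulVec (d ℓ) b|
            + (X.mulVec (d ℓ) b)^2) + ∑ i, ε ℓ i)) atTop (nhds 0) := by
    have h1 := hcont.sub_const ((1/(n:ℝ)) * ∑ b, (y b - X.mulVec (fun k => s k * βt k) b)^2
      + ∑ i, (1 - s i^2) * βt i^2)
    have h2 := (hφ0.const_mul (1/(n:ℝ))).add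
      (tendsto_finset_sum (Finset.univ : Finset (Fin p)) (fun i _ => hε0 i))
    have h3 := h1.add h2
    simpa using h3
  -- the fitted-gap sum tends to zero
  have hG : Tendsto (fun ℓ => ∑ b, (X.mulVec (fun k => s k * (v ℓ k - βt k)) b)^2)
      atTop (nhds 0) := by
    have hbound : ∀ ℓ, ∑ b, (X.mulVec (fun k => s k * (v ℓ k - βt k)) b)^2
        ≤ (n:ℝ) * ((((1/(n:ℝ)) * ∑ b, (y b - X.mulVec (fun k => sseq ℓ k * βt k) b)^2
          + ∑ i, (1 - sseq ℓ i^2) * βt i^2)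
        - ((1/(n:ℝ)) * ∑ b, (y b - X.mulVec (fun k => s k * βt k) b)^2
          + ∑ i, (1 - s i^2) * βt i^2))
        + ((1/(n:ℝ)) * ∑ b, (2 * Real.sqrt (∑ b', y b'^2) * |X.mulVec (d ℓ) b|
            + (X.mulVec (d ℓ) b)^2) + ∑ i, ε ℓ i)) := by
      intro ℓ
      have hG' := hGb ℓ
      have hid : (n:ℝ) * ((1/(n:ℝ)) * ∑ b, (X.mulVec (fun k => s k * (v ℓ k - βt k)) b)^2)
          = ∑ b, (X.mulVec (fun k => s k * (v ℓ k - βt k)) b)^2 := by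
        field_simp
      nlinarith [hG']
    have hlim : Tendsto (fun ℓ => (n:ℝ) * ((((1/(n:ℝ)) * ∑ b, (y b - X.mulVec (fun k => sseq ℓ k * βt k) b)^2
          + ∑ i, (1 - sseq ℓ i^2) * βt i^2)
        - ((1/(n:ℝ)) * ∑ b, (y b - X.mulVec (fun k => s k * βt k) b)^2
          + ∑ i, (1 - s i^2) * βt i^2))
        + ((1/(n:ℝ)) * ∑ b, (2 * Real.sqrt (∑ b', y b'^2) * |X.mulVec (d ℓ) b|
            + (X.mulVec (d ℓ) b)^2) + ∑ i, ε ℓ i))) atTop (nhds 0) := by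
      have := hU.const_mul (n:ℝ)
      simpa using this
    exact squeeze_zero (fun ℓ => Finset.sum_nonneg fun b _ => sq_nonneg _) hbound hlim
  -- coordinatewise convergence of the fitted gap
  have hterm : ∀ b, Tendsto (fun ℓ => X.mulVec (fun k => s k * (v ℓ k - βt k)) b)
      atTop (nhds 0) := by
    intro b
    refine tendsto_of_sq_le (fun ℓ => ?_) hG
    exact Finset.single_le_sum
      (f := fun b' => (X.mulVec (fun k => s k * (v ℓ k - βt k)) b')^2)
      (fun b' _ => sq_nonneg _) (Finset.mem_univ b)
  -- final assembly
  have hfin : ∀ ℓ, X.mulVec (fun k => sseq ℓ k * βseq ℓ k) b0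
      = X.mulVec (fun k => s k * (v ℓ k - βt k)) b0
        + X.mulVec (fun k => s k * βt k) b0 + X.mulVec (d ℓ) b0 := by
    intro ℓ
    have hsplit : X.mulVec (fun k => s k * (v ℓ k - βt k)) b0
        = X.mulVec (fun k => s k * v ℓ k) b0 - X.mulVec (fun k => s k * βt k) b0 := by
      simp only [Matrix.mulVec, dotProduct, ← Finset.sum_sub_distrib]
      exact Finset.sum_congr rfl fun k _ => by ring
    rw [hsplit, hvs ℓ b0]; ring
  have hlast : Tendsto (fun ℓ => X.mulVec (fun k => s k * (v ℓ k - βt k)) b0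
      + X.mulVec (fun k => s k * βt k) b0 + X.mulVec (d ℓ) b0) atTop
      (nhds (X.mulVec (fun k => s k * βt k) b0)) := by
    have := ((hterm b0).add
      (tendsto_const_nhds (x := X.mulVec (fun k => s k * βt k) b0))).add (hδ0 b0)
    simpa using this
  exact Tendsto.congr (fun ℓ => (hfin ℓ).symm) hlast

theorem residual_norm_tendsto (n p J : ℕ) (hn : 0 < n)
    (X : Matrix (Fin n) (Fin p) ℝ) (g : Fin p → Fin J) (y : Fin n → ℝ)
    (tseq : ℕ → Fin J → ℝ) (htseq : ∀ ℓ j, tseq ℓ j ∈ Set.Ioo (0 : ℝ) 1)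
    (t : Fin J → ℝ) (ht : ∀ j, t j ∈ Set.Icc (0 : ℝ) 1)
    (htend : Filter.Tendsto tseq Filter.atTop (nhds t))
    (βseq : ℕ → Fin p → ℝ)
    (hβseq : ∀ ℓ, (Lmat X g (tseq ℓ)).mulVec (βseq ℓ) =
      ((1 : ℝ) / n) • ((X * Tmat g (tseq ℓ))ᵀ.mulVec y))
    (βt : Fin p → ℝ)
    (hβt : (Lmat X g t).mulVec βt = ((1 : ℝ) / n) • ((X * Tmat g t)ᵀ.mulVec y)) :
    Filter.Tendsto
      (fun ℓ => Real.sqrt (∑ a, (y a - (X * Tmat g (tseq ℓ)).mulVec (βseq ℓ) a) ^ 2))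
      Filter.atTop
      (nhds (Real.sqrt (∑ a, (y a - (X * Tmat g t).mulVec βt a) ^ 2))) := by
  have hnR : (0:ℝ) < n := by exact_mod_cast hn
  have hfit : ∀ b, Filter.Tendsto (fun ℓ => X.mulVec (fun k => tseq ℓ (g k) * βseq ℓ k) b)
      Filter.atTop (nhds (X.mulVec (fun k => t (g k) * βt k) b)) := by
    intro b
    exact main_flat hnR X y (fun ℓ k => tseq ℓ (g k)) (fun ℓ k => htseq ℓ (g k))
      (fun k => t (g k)) (fun k => ht (g k))
      (fun k => tendsto_pi_nhds.mp htend (g k))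
      βseq (fun ℓ i => normal_comp hnR X g (tseq ℓ) y (βseq ℓ) (hβseq ℓ) i)
      βt (fun i => normal_comp hnR X g t y βt hβt i) b
  have hsum : Filter.Tendsto (fun ℓ => ∑ a, (y a - (X * Tmat g (tseq ℓ)).mulVec (βseq ℓ) a)^2)
      Filter.atTop (nhds (∑ a, (y a - (X * Tmat g t).mulVec βt a)^2)) := by
    simp only [mulVec_Tmat]
    exact tendsto_finset_sum _ fun a _ => (tendsto_const_nhds.sub (hfit a)).pow 2
  exact (Real.continuous_sqrt.tendsto _).comp hsum
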